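/- Let S = k[y₀,…,y₄] and let f₁ = y₀²y₁ − y₁y₃² + y₀y₃y₄, f₂ = y₀y₁² + y₁y₂y₃ − y₀y₃², f₃ = y₁³ − y₁y₂² + y₀y₂y₃ − y₁y₃² + y₁y₂y₄, f₅ = y₀y₁y₂ + y₁²y₃ − y₃³ + y₂y₃y₄, f₆ = y₀²y₃ − y₃³ + y₀y₁y₄ + y₂y₃y₄. Then the element γ = (y₁∧y₂) ⊗ f₁ + (−y₀∧y₂ + y₁∧y₃) ⊗ f₂ − (y₀∧y₃) ⊗ f₃ + (y₀∧y₁ − y₂∧y₃) ⊗ f₅ + (y₂∧y₃) ⊗ f₆ ∈ ⋀²S₁ ⊗ S₃ is annihilated by the Koszul differential δ(a∧b ⊗ f) = a ⊗ bf − b ⊗ af mapping to S₁ ⊗ S₄. -/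
import Mathlib


open MvPolynomial TensorProduct

/-- The Koszul differential applied to `y_a ∧ y_b ⊗ f`, namely `a ⊗ bf − b ⊗ af`. -/
noncomputable def dK2 (k : Type*) [Field k] (a b : Fin 5) (f : MvPolynomial (Fin 5) k) :
    MvPolynomial (Fin 5) k ⊗[k] MvPolynomial (Fin 5) k :=
  X a ⊗ₜ[k] (X b * f) - X b ⊗ₜ[k] (X a * f)

/-- For the cubics `f₁, f₂, f₃, f₅, f₆` of the projected Veronese surface, the element
`γ = (y₁∧y₂)⊗f₁ + (−y₀∧y₂ + y₁∧y₃)⊗f₂ − (y₀∧y₃)⊗f₃ + (y₀∧y₁ − y₂∧y₃)⊗f₅ + (y₂∧y₃)⊗f₆`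
is annihilated by the Koszul differential `δ(a∧b⊗f) = a⊗bf − b⊗af`. -/
theorem veronese_koszul_cycle (k : Type*) [Field k]
    (f1 f2 f3 f5 f6 : MvPolynomial (Fin 5) k)
    (hf1 : f1 = X 0 ^ 2 * X 1 - X 1 * X 3 ^ 2 + X 0 * X 3 * X 4)
    (hf2 : f2 = X 0 * X 1 ^ 2 + X 1 * X 2 * X 3 - X 0 * X 3 ^ 2)
    (hf3 : f3 = X 1 ^ 3 - X 1 * X 2 ^ 2 + X 0 * X 2 * X 3 - X 1 * X 3 ^ 2 + X 1 * X 2 * X 4)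
    (hf5 : f5 = X 0 * X 1 * X 2 + X 1 ^ 2 * X 3 - X 3 ^ 3 + X 2 * X 3 * X 4)
    (hf6 : f6 = X 0 ^ 2 * X 3 - X 3 ^ 3 + X 0 * X 1 * X 4 + X 2 * X 3 * X 4) :
    dK2 k 1 2 f1 - dK2 k 0 2 f2 + dK2 k 1 3 f2 - dK2 k 0 3 f3
      + dK2 k 0 1 f5 - dK2 k 2 3 f5 + dK2 k 2 3 f6 = 0 := by
  have key : dK2 k 1 2 f1 - dK2 k 0 2 f2 + dK2 k 1 3 f2 - dK2 k 0 3 f3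
      + dK2 k 0 1 f5 - dK2 k 2 3 f5 + dK2 k 2 3 f6
      = (X 0 : MvPolynomial (Fin 5) k) ⊗ₜ[k] (X 1 * f5 - X 2 * f2 - X 3 * f3)
      + (X 1 : MvPolynomial (Fin 5) k) ⊗ₜ[k] (X 2 * f1 + X 3 * f2 - X 0 * f5)
      + (X 2 : MvPolynomial (Fin 5) k) ⊗ₜ[k] (X 0 * f2 - X 1 * f1 - X 3 * f5 + X 3 * f6)
      + (X 3 : MvPolynomial (Fin 5) k) ⊗ₜ[k] (X 0 * f3 - X 1 * f2 + X 2 * f5 - X 2 * f6) := by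
    simp only [dK2, tmul_sub, tmul_add]
    abel
  rw [key]
  have h0 : (X 1 * f5 - X 2 * f2 - X 3 * f3 : MvPolynomial (Fin 5) k) = 0 := by
    subst hf2 hf3 hf5; ring
  have h1 : (X 2 * f1 + X 3 * f2 - X 0 * f5 : MvPolynomial (Fin 5) k) = 0 := by
    subst hf1 hf2 hf5; ring
  have h2 : (X 0 * f2 - X 1 * f1 - X 3 * f5 + X 3 * f6 : MvPolynomial (Fin 5) k) = 0 := by
    subst hf1 hf2 hf5 hf6; ring
  have h3 : (X 0 * f3 - X 1 * f2 + X 2 * f5 - X 2 * f6 : MvPolynomial (Fin 5) k) = 0 := by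
    subst hf2 hf3 hf5 hf6; ring
  rw [h0, h1, h2, h3]
  simp
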